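/- The function w₋(z) = (1/2)(1 + z - √((z+3)(z-1))) evaluated at z = e^{iθ} satisfies, as θ → 0⁺, log(Re(w₋(e^{iθ}))) = √(θ/2) + O(θ); consequently, with E = 2 - 2cos θ = θ² + O(θ⁴), the Lyapunov exponent γ(E) = log(Re w₋(e^{iθ})) of the regular comb scales as γ(E) ~ (1/√2)·E^{1/4} as E → 0⁺. -/

import Mathlib

private lemma aux1 (r a σ : ℝ) (hr0 : 0 < r) (hr2 : r^2 = σ) (hr34 : r ≤ 3/4)
    (e1 : (2*r - a) * (2*r) ≤ 7*σ^2) : 2*r - a ≤ 3*σ := by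
  subst hr2
  have e2 : 2*r - a ≤ 7*r^3/2 := by nlinarith [e1, hr0]
  nlinarith [e2, mul_le_mul_of_nonneg_left hr34 (sq_nonneg r), sq_nonneg r]

lemma real_est (σ : ℝ) (hσ : 0 < σ) (hσh : σ ≤ 1/2) :
    |Real.log (1 + (Real.sqrt (σ * Real.sqrt (16 - 12*σ^2) - 2*σ^2*(3 - 2*σ^2)) - 2*σ^2)/2)
      - Real.sqrt σ| ≤ 4*σ := by
  have hσsq : σ^2 ≤ 1/4 := by nlinarith only [hσ.le, hσh]
  have hσ2 : σ^2 ≤ σ/2 := by nlinarith only [hσ.le, hσh]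
  have hσ3 : σ^3 ≤ σ^2/2 := by nlinarith only [hσ.le, hσh, sq_nonneg σ]
  have hσ4 : σ^4 ≤ σ/8 := by nlinarith only [hσ.le, hσh, hσ2, hσ3, sq_nonneg σ]
  have hP0 : 0 ≤ 2*σ^2*(3 - 2*σ^2) := by nlinarith only [sq_nonneg σ, hσsq]
  have hP_ub : 2*σ^2*(3 - 2*σ^2) ≤ 3*σ := by
    nlinarith only [sq_nonneg (σ^2), hσ2]
  have h16 : (0:ℝ) ≤ 16 - 12*σ^2 := by nlinarith only [hσsq]
  set b := Real.sqrt (16 - 12*σ^2) with hbdef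
  clear_value b
  have hb2 : b^2 = 16 - 12*σ^2 := hbdef ▸ Real.sq_sqrt h16
  have hb0 : 0 ≤ b := hbdef ▸ Real.sqrt_nonneg _
  clear hbdef
  have hb_lb : (18/5 : ℝ) ≤ b := by nlinarith only [hb2, hb0, hσsq]
  have hb_ub : b ≤ 4 := by nlinarith only [hb2, hb0, sq_nonneg σ]
  have hb4 : 4 - b ≤ 2*σ^2 := by nlinarith only [hb2, hb_lb, hb_ub, sq_nonneg σ]
  set A := σ * b - 2*σ^2*(3 - 2*σ^2) with hAdef
  clear_value A
  have hmul1 := mul_le_mul_of_nonneg_left hb_lb hσ.le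
  have hmul2 := mul_le_mul_of_nonneg_left hb_ub hσ.le
  have hA_lb : (3/5)*σ ≤ A := by rw [hAdef]; linarith only [hmul1, hP_ub]
  have hA_ub : A ≤ 4*σ := by rw [hAdef]; linarith only [hmul2, hP0]
  have hA4 : 4*σ^4 ≤ A := by linarith only [hσ4, hA_lb, hσ.le]
  have hA0 : 0 ≤ A := le_trans (by positivity) hA_lb
  have h7 : 4*σ - A ≤ 7*σ^2 := by
    rw [hAdef]
    nlinarith only [mul_le_mul_of_nonneg_left hb4 hσ.le, hσ3, sq_nonneg (σ^2)]
  set a := Real.sqrt A with hadef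
  clear_value a
  have ha2 : a^2 = A := hadef ▸ Real.sq_sqrt hA0
  have ha0 : 0 ≤ a := hadef ▸ Real.sqrt_nonneg _
  clear hadef
  set r := Real.sqrt σ with hrdef
  clear_value r
  have hr2 : r^2 = σ := hrdef ▸ Real.sq_sqrt hσ.le
  have hr0 : 0 < r := hrdef ▸ Real.sqrt_pos.2 hσ
  clear hrdef
  have hr34 : r ≤ 3/4 := by nlinarith only [hr2, hr0.le, hσh]
  have ha_ub : a ≤ 2*r := by nlinarith only [ha2, hr2, hA_ub, ha0, hr0.le]
  have ha_lb : 2*σ^2 ≤ a := by nlinarith only [ha2, hA4, ha0, sq_nonneg σ, sq_nonneg (σ^2)]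
  have h8 : (2*r - a)*(2*r + a) = 4*σ - A := by linear_combination 4*hr2 - ha2
  set t := (a - 2*σ^2)/2 with htdef
  have ht0 : 0 ≤ t := by rw [htdef]; linarith only [ha_lb]
  have ht_ub : t ≤ r := by rw [htdef]; nlinarith only [ha_ub, sq_nonneg σ]
  have hd : |a - 2*r| ≤ 3*σ := by
    rcases abs_cases (a - 2*r) with ⟨he, hs⟩ | ⟨he, hs⟩ <;> rw [he]
    · linarith only [ha_ub, hσ.le]
    · have e1 : (2*r - a) * (2*r) ≤ 7*σ^2 := by
        have e0 : (2*r - a) * (2*r) ≤ (2*r - a) * (2*r + a) :=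
          mul_le_mul_of_nonneg_left (by linarith only [ha0]) (by linarith only [hs])
        rw [h8] at e0; linarith only [e0, h7]
      linarith only [aux1 r a σ hr0 hr2 hr34 e1]
  have hd' := abs_le.mp hd
  have ht_near : |t - r| ≤ 2*σ := by
    rw [abs_le, htdef]
    constructor
    · linarith only [hd'.1, hσ2, sq_nonneg σ]
    · linarith only [hd'.2, hσ2, sq_nonneg σ]
  have h1t : (0:ℝ) < 1 + t := by linarith only [ht0]
  have hlog_ub : Real.log (1 + t) ≤ t := by
    have := Real.log_le_sub_one_of_pos h1t; linarith only [this]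
  have hlog_lb : t - t^2 ≤ Real.log (1 + t) := by
    have h2 := Real.log_le_sub_one_of_pos (show (0:ℝ) < (1+t)⁻¹ by positivity)
    rw [Real.log_inv] at h2
    have h3 : (1+t)⁻¹ - 1 = -(t/(1+t)) := by field_simp; ring
    rw [h3] at h2
    have h4 : t - t^2 ≤ t/(1+t) := by
      rw [le_div_iff₀ h1t]; nlinarith only [ht0, h1t]
    linarith only [h2, h4]
  have htt : t^2 ≤ σ := by nlinarith only [ht_ub, ht0, hr2]
  have habs1 : |Real.log (1 + t) - t| ≤ σ := by
    rw [abs_le]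
    constructor
    · linarith only [hlog_lb, htt]
    · linarith only [hlog_ub, hσ.le]
  calc |Real.log (1 + t) - r| = |(Real.log (1+t) - t) + (t - r)| := by ring_nf
    _ ≤ |Real.log (1+t) - t| + |t - r| := abs_add_le _ _
    _ ≤ σ + 2*σ := add_le_add habs1 ht_near
    _ ≤ 4*σ := by linarith only [hσ.le]

private lemma aux2 (θ σ p q : ℝ) (h0 : 0 < θ) (h1 : θ < 1) (hp2 : p^2 = θ/2) (hq2 : q^2 = σ)
    (hq0 : 0 ≤ q) (hqp : q ≤ p) (hlow : θ/2 - (θ/2)^3/4 ≤ σ) : p - q ≤ θ := by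
  have hp0 : θ/2 ≤ p := by nlinarith only [hp2, hq0, hqp, h0, h1]
  have e1 : (p - q)*(p + q) = θ/2 - σ := by linear_combination hp2 - hq2
  have e0 : (p - q)*(θ/2) ≤ (p - q)*(p + q) :=
    mul_le_mul_of_nonneg_left (by linarith only [hp0, hq0]) (by linarith only [hqp])
  have e2 : (p - q)*(θ/2) ≤ (θ/2)^3/4 := by
    rw [e1] at e0; linarith only [e0, hlow]
  nlinarith only [e2, h0, h1, mul_pos h0 h0]

lemma quarter_pow (σ : ℝ) (hσ : 0 < σ) :
    ((2*σ)^2 : ℝ) ^ ((1:ℝ)/4) / Real.sqrt 2 = Real.sqrt σ := by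
  have h2σ : (0:ℝ) ≤ 2*σ := by linarith
  rw [← Real.rpow_two, ← Real.rpow_mul h2σ, show (2:ℝ) * ((1:ℝ)/4) = 1/2 by norm_num,
    ← Real.sqrt_eq_rpow, Real.sqrt_mul (by norm_num : (0:ℝ) ≤ 2) σ,
    mul_div_cancel_left₀ _ (by positivity : Real.sqrt 2 ≠ 0)]
lemma re_cpow_half (u : ℂ) (hu : u ≠ 0) :
    (u ^ ((1:ℂ)/2)).re = Real.sqrt ((‖u‖ + u.re) / 2) := by
  rw [Complex.cpow_def_of_ne_zero hu, Complex.exp_re]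
  have h1 : (Complex.log u * (1/2)).re = Real.log (‖u‖) / 2 := by
    simp [Complex.mul_re, Complex.log_re, Complex.log_im]; ring
  have h2 : (Complex.log u * (1/2)).im = Complex.arg u / 2 := by
    simp [Complex.mul_im, Complex.log_re, Complex.log_im]; ring
  rw [h1, h2]
  have habs : 0 < ‖u‖ := norm_pos_iff.mpr hu
  have hcos : Real.cos (Complex.arg u / 2) = Real.sqrt ((1 + Real.cos (Complex.arg u)) / 2) :=
    Real.cos_half (le_of_lt (Complex.neg_pi_lt_arg u)) (Complex.arg_le_pi u)
  rw [hcos, Complex.cos_arg hu,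
    show Real.log (‖u‖) / 2 = Real.log (Real.sqrt (‖u‖)) by
      rw [Real.log_sqrt habs.le],
    Real.exp_log (Real.sqrt_pos.2 habs), ← Real.sqrt_mul habs.le]
  congr 1
  field_simp

lemma re_formula (θ : ℝ) (h0 : 0 < θ) (h1 : θ < 1) :
    (((1 : ℂ) + Complex.exp (Complex.I * θ)
        + ((Complex.exp (Complex.I * θ) + 3) * (Complex.exp (Complex.I * θ) - 1))
          ^ ((1 : ℂ) / 2)) / 2).re
      = 1 + (Real.sqrt (Real.sin (θ/2) * Real.sqrt (16 - 12*(Real.sin (θ/2))^2)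
          - 2*(Real.sin (θ/2))^2*(3 - 2*(Real.sin (θ/2))^2)) - 2*(Real.sin (θ/2))^2)/2 := by
  set σ := Real.sin (θ/2) with hσdef
  set z := Complex.exp (Complex.I * θ) with hzdef
  have hIθ : Complex.I * (θ:ℂ) = (θ:ℂ) * Complex.I := mul_comm _ _
  have hzre : z.re = Real.cos θ := by rw [hzdef, hIθ, Complex.exp_ofReal_mul_I_re]
  have hzim : z.im = Real.sin θ := by rw [hzdef, hIθ, Complex.exp_ofReal_mul_I_im]
  set c := Real.cos θ with hcdef
  set s := Real.sin θ with hsdef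
  have hsolve : s^2 = 1 - c^2 := by rw [hsdef, hcdef, Real.sin_sq]
  have hσpos : 0 < σ := Real.sin_pos_of_pos_of_lt_pi (by linarith) (by
    have := Real.pi_gt_three; linarith)
  have hσhalf : σ < 1/2 := lt_of_lt_of_le (Real.sin_lt (by linarith)) (by linarith)
  have hc : c = 1 - 2*σ^2 := by
    have h := Real.cos_sq (θ/2)
    have h' := Real.sin_sq_add_cos_sq (θ/2)
    rw [show 2*(θ/2) = θ by ring] at h
    rw [hcdef, hσdef]; nlinarith [h, h']
  have hspos : 0 < s := Real.sin_pos_of_pos_of_lt_pi h0 (by have := Real.pi_gt_three; linarith)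
  -- u ≠ 0
  set u := (z + 3) * (z - 1) with hudef
  have hu : u ≠ 0 := by
    apply mul_ne_zero
    · intro h; have := congrArg Complex.im h; simp [hzim] at this; exact hspos.ne' this
    · intro h; have := congrArg Complex.im h; simp [hzim] at this; exact hspos.ne' this
  -- re and abs of u
  have hure : u.re = 2*(c-1)*(c+2) := by
    rw [hudef]
    simp [Complex.mul_re, Complex.add_re, Complex.sub_re, Complex.add_im, Complex.sub_im,
      hzre, hzim]
    nlinarith [hsolve]
  have huim : u.im = s*(2*c+2) := by
    rw [hudef]
    simp [Complex.mul_im, Complex.add_re, Complex.sub_re, Complex.add_im, Complex.sub_im,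
      hzre, hzim]
    ring
  have hnsq : Complex.normSq u = (2*σ)^2 * (16 - 12*σ^2) := by
    rw [Complex.normSq_apply, hure, huim]
    nlinarith [hsolve, hc]
  have h16 : (0:ℝ) ≤ 16 - 12*σ^2 := by nlinarith
  have habs : ‖u‖ = 2*σ * Real.sqrt (16 - 12*σ^2) := by
    rw [Complex.norm_def, hnsq, Real.sqrt_mul (by positivity),
      Real.sqrt_sq (by positivity)]
  have hA : (‖u‖ + u.re) / 2
      = σ * Real.sqrt (16 - 12*σ^2) - 2*σ^2*(3 - 2*σ^2) := by
    rw [habs, hure, hc]; ring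
  rw [show ((1 : ℂ) + z + u ^ ((1:ℂ)/2)) / 2
      = ((1 : ℂ) + z + u ^ ((1:ℂ)/2)) * (1/2 : ℝ) by push_cast; ring,
    Complex.mul_re]
  simp only [Complex.add_re, Complex.one_re, hzre, re_cpow_half u hu, hA,
    Complex.ofReal_re, Complex.ofReal_im]
  rw [hc]
  ring

open Asymptotics Filter Complex in
/-- Low-energy scaling of the regular comb Lyapunov exponent: with
`w₋(z) = (1 + z - √((z+3)(z-1)))/2` in the branch with `w₋(1) = 1` and
`Re w₋(e^{iθ}) > 1` for small `θ > 0` (here realized as `(1 + z + ((z+3)(z-1))^{1/2})/2`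
with the principal power), one has `log(Re w₋(e^{iθ})) = √(θ/2) + O(θ)` as `θ → 0⁺`;
with `E = 2 - 2cos θ`, this gives `γ(E) = log(Re w₋(e^{iθ})) = E^{1/4}/√2 + O(E^{1/2})`. -/
theorem stmt15 :
    (fun θ : ℝ =>
        Real.log ((((1 : ℂ) + Complex.exp (Complex.I * θ)
            + ((Complex.exp (Complex.I * θ) + 3) * (Complex.exp (Complex.I * θ) - 1))
              ^ ((1 : ℂ) / 2)) / 2).re)
          - Real.sqrt (θ / 2))
      =O[nhdsWithin 0 (Set.Ioi 0)] (fun θ : ℝ => θ) ∧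
    (fun θ : ℝ =>
        Real.log ((((1 : ℂ) + Complex.exp (Complex.I * θ)
            + ((Complex.exp (Complex.I * θ) + 3) * (Complex.exp (Complex.I * θ) - 1))
              ^ ((1 : ℂ) / 2)) / 2).re)
          - (2 - 2 * Real.cos θ) ^ ((1 : ℝ) / 4) / Real.sqrt 2)
      =O[nhdsWithin 0 (Set.Ioi 0)]
        (fun θ : ℝ => Real.sqrt (2 - 2 * Real.cos θ)) := by
  have hmem : Set.Ioo (0:ℝ) 1 ∈ nhdsWithin 0 (Set.Ioi 0) :=
    Ioo_mem_nhdsGT_of_mem ⟨le_refl 0, one_pos⟩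
  constructor
  · rw [Asymptotics.isBigO_iff]
    refine ⟨3, ?_⟩
    filter_upwards [hmem] with θ hθ
    obtain ⟨h0, h1⟩ := hθ
    have hhalf : 0 < θ/2 := by linarith
    have hσpos : 0 < Real.sin (θ/2) :=
      Real.sin_pos_of_pos_of_lt_pi hhalf (by have := Real.pi_gt_three; linarith)
    have hσlt : Real.sin (θ/2) < θ/2 := Real.sin_lt hhalf
    have hlow : θ/2 - (θ/2)^3/4 ≤ Real.sin (θ/2) :=
      by have h := Real.sin_gt_sub_cube hhalf; have h3 := pow_pos hhalf 3; linarith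
    have hest := real_est (Real.sin (θ/2)) hσpos (by linarith)
    have hre := re_formula θ h0 h1
    set σ := Real.sin (θ/2) with hσdef
    set q := Real.sqrt σ with hqdef
    set p := Real.sqrt (θ/2) with hpdef
    have hqp : q ≤ p := Real.sqrt_le_sqrt hσlt.le
    have hpq : p - q ≤ θ :=
      aux2 θ σ p q h0 h1 (Real.sq_sqrt hhalf.le) (Real.sq_sqrt hσpos.le)
        (Real.sqrt_nonneg _) hqp hlow
    simp only [Real.norm_eq_abs, hre]
    rw [abs_of_pos h0]
    set L := Real.log (1 + (Real.sqrt (σ * Real.sqrt (16 - 12*σ^2)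
      - 2*σ^2*(3 - 2*σ^2)) - 2*σ^2)/2) with hLdef
    have step : L - p = (L - q) + (q - p) := by ring
    calc |L - p| ≤ |L - q| + |q - p| := by rw [step]; exact abs_add_le _ _
      _ ≤ 4*σ + (p - q) := by
          have habs_qp : |q - p| = p - q := by
            rw [abs_sub_comm]; exact abs_of_nonneg (by linarith)
          exact add_le_add hest habs_qp.le
      _ ≤ 3 * θ := by linarith
  · rw [Asymptotics.isBigO_iff]
    refine ⟨2, ?_⟩
    filter_upwards [hmem] with θ hθ
    obtain ⟨h0, h1⟩ := hθ
    have hhalf : 0 < θ/2 := by linarith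
    have hσpos : 0 < Real.sin (θ/2) :=
      Real.sin_pos_of_pos_of_lt_pi hhalf (by have := Real.pi_gt_three; linarith)
    have hσlt : Real.sin (θ/2) < θ/2 := Real.sin_lt hhalf
    have hest := real_est (Real.sin (θ/2)) hσpos (by linarith)
    have hre := re_formula θ h0 h1
    set σ := Real.sin (θ/2) with hσdef
    have hc : Real.cos θ = 1 - 2*σ^2 := by
      have h := Real.cos_sq (θ/2)
      have h' := Real.sin_sq_add_cos_sq (θ/2)
      rw [show 2*(θ/2) = θ by ring] at h
      rw [hσdef]; nlinarith only [h, h']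
    have hEsq : (2 : ℝ) - 2 * Real.cos θ = (2*σ)^2 := by rw [hc]; ring
    simp only [Real.norm_eq_abs, hre, hEsq, quarter_pow σ hσpos,
      Real.sqrt_sq (by linarith : (0:ℝ) ≤ 2*σ)]
    rw [abs_of_pos (by linarith : (0:ℝ) < 2*σ)]
    calc |Real.log (1 + (Real.sqrt (σ * Real.sqrt (16 - 12*σ^2)
          - 2*σ^2*(3 - 2*σ^2)) - 2*σ^2)/2) - Real.sqrt σ| ≤ 4*σ := hest
      _ ≤ 2 * (2*σ) := by linarith
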